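/- Let d₀ be the diameter of D in the metric g. There exists a constant K₁ > 0, independent of (x,ξ) ∈ D × G and t ∈ [0,d₀], such that for every 2 ≤ k ≤ n, |ξ|_g |ż^k(x, ξ/|ξ|_g, t)| ≤ K₁ for all x ∈ D, ξ ∈ G and t ∈ [0,d₀], where |ξ|_g = (Σ_{i,j=1}^n g_{ij}(x) ξ^i ξ^j)^{1/2}. -/

import Mathlib

open MeasureTheory Real Topology Filter Set

noncomputable section

/-- Partial derivative of `f` in the coordinate direction `j` (line derivative). -/
noncomputable def pd {ι : Type} [Fintype ι] [DecidableEq ι]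
    {F : Type} [NormedAddCommGroup F] [NormedSpace ℝ F]
    (j : ι) (f : (ι → ℝ) → F) (x : ι → ℝ) : F :=
  lineDeriv ℝ f x (Pi.single j 1)

/-- Iterated partial derivatives along a list of coordinate directions; the list encodes
a multi-index `β`, with `|β| = l.length`. -/
noncomputable def pdList {ι : Type} [Fintype ι] [DecidableEq ι]
    {F : Type} [NormedAddCommGroup F] [NormedSpace ℝ F] :
    List ι → ((ι → ℝ) → F) → (ι → ℝ) → F
  | [], f => f
  | j :: l, f => pd j (pdList l f)

/-- Existence of all the iterated partial derivatives encoded by the list `l`,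
at every point of `s`. -/
def PdListDiffOn {ι : Type} [Fintype ι] [DecidableEq ι]
    {F : Type} [NormedAddCommGroup F] [NormedSpace ℝ F] :
    List ι → ((ι → ℝ) → F) → Set (ι → ℝ) → Prop
  | [], _, _ => True
  | j :: l, f, s => PdListDiffOn l f s ∧
      ∀ x ∈ s, LineDifferentiableAt ℝ (pdList l f) x (Pi.single j 1)

/-- The Christoffel symbols `Γ^s_{jk}` of the metric `g`. -/
noncomputable def christoffel {n : ℕ} (g : (Fin n → ℝ) → Matrix (Fin n) (Fin n) ℝ)
    (s j k : Fin n) (x : Fin n → ℝ) : ℝ :=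
  (1 / 2) * ∑ l, (g x)⁻¹ s l *
    (pd j (fun y => g y k l) x + pd k (fun y => g y j l) x - pd l (fun y => g y j k) x)

/-- `w` is a geodesic of `g`: a `C²` curve satisfying the geodesic equations. -/
def IsGeodesic {n : ℕ} (g : (Fin n → ℝ) → Matrix (Fin n) (Fin n) ℝ)
    (w : ℝ → Fin n → ℝ) : Prop :=
  (∀ i, ContDiff ℝ 2 fun t => w t i) ∧
  ∀ (t : ℝ) (i : Fin n), deriv (deriv fun s => w s i) t =
    - ∑ j, ∑ k, christoffel g i j k (w t) * deriv (fun s => w s j) t * deriv (fun s => w s k) t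

/-- `z x ξ` is, for every `x` and `ξ ≠ 0`, the unique geodesic of `g` with initial
position `x` and initial velocity `ξ`. -/
def IsGeodesicFlow {n : ℕ} (g : (Fin n → ℝ) → Matrix (Fin n) (Fin n) ℝ)
    (z : (Fin n → ℝ) → (Fin n → ℝ) → ℝ → Fin n → ℝ) : Prop :=
  ∀ x ξ, ξ ≠ (0 : Fin n → ℝ) →
    (IsGeodesic g (z x ξ) ∧ z x ξ 0 = x ∧ ∀ i, deriv (fun t => z x ξ t i) 0 = ξ i) ∧
    ∀ w : ℝ → Fin n → ℝ, IsGeodesic g w → w 0 = x →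
      (∀ i, deriv (fun t => w t i) 0 = ξ i) → w = z x ξ

/-- `ż^i(x,ξ,t)`, the `i`-th component of the velocity of the geodesic `z x ξ`. -/
noncomputable def zdot {n : ℕ} (z : (Fin n → ℝ) → (Fin n → ℝ) → ℝ → Fin n → ℝ)
    (x ξ : Fin n → ℝ) (t : ℝ) (i : Fin n) : ℝ :=
  deriv (fun s => z x ξ s i) t

/-- `γ` is a unit-speed (in the metric `g`) geodesic from `x` to `y`, defined on `[0,T]`
and lying in `D`. -/
def UnitSpeedGeodesicIn {n : ℕ} (g : (Fin n → ℝ) → Matrix (Fin n) (Fin n) ℝ)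
    (D : Set (Fin n → ℝ)) (x y : Fin n → ℝ) (γ : ℝ → Fin n → ℝ) (T : ℝ) : Prop :=
  0 ≤ T ∧ IsGeodesic g γ ∧ γ 0 = x ∧ γ T = y ∧ (∀ t ∈ Set.Icc 0 T, γ t ∈ D) ∧
  ∀ t ∈ Set.Icc 0 T,
    ∑ i, ∑ j, g (γ t) i j * deriv (fun s => γ s i) t * deriv (fun s => γ s j) t = 1

/-- `D` is strongly convex with respect to `g`: any two points of `D` are joined by a
unique (unit-speed) geodesic of `g` which lies in `D`. -/
def StronglyConvexIn {n : ℕ} (g : (Fin n → ℝ) → Matrix (Fin n) (Fin n) ℝ)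
    (D : Set (Fin n → ℝ)) : Prop :=
  ∀ x ∈ D, ∀ y ∈ D,
    (∃ γ T, UnitSpeedGeodesicIn g D x y γ T) ∧
    ∀ γ T γ' T', UnitSpeedGeodesicIn g D x y γ T → UnitSpeedGeodesicIn g D x y γ' T' →
      T = T' ∧ ∀ t ∈ Set.Icc 0 T, γ t = γ' t

/-- The function `u(x,ξ) = Σ_{i,j=2}^n ∫₀^∞ a_{ij}(z(x,ξ,t)) ż^i(x,ξ,t) ż^j(x,ξ,t) dt`. -/
noncomputable def uFun {n : ℕ} [NeZero n] (a : Fin n → Fin n → (Fin n → ℝ) → ℝ)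
    (z : (Fin n → ℝ) → (Fin n → ℝ) → ℝ → Fin n → ℝ) (x ξ : Fin n → ℝ) : ℝ :=
  ∑ i ∈ Finset.univ.filter fun i : Fin n => i ≠ 0,
    ∑ j ∈ Finset.univ.filter fun j : Fin n => j ≠ 0,
      ∫ t in Set.Ioi (0 : ℝ), a i j (z x ξ t) * zdot z x ξ t i * zdot z x ξ t j

/-- `I_{ij}(x,ξ) = ∫₀^∞ b(z(x,ξ,t)) ż^i(x,ξ,t) ż^j(x,ξ,t) dt`. -/
noncomputable def Ifun {n : ℕ} (b : (Fin n → ℝ) → ℝ)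
    (z : (Fin n → ℝ) → (Fin n → ℝ) → ℝ → Fin n → ℝ) (i j : Fin n) (x ξ : Fin n → ℝ) : ℝ :=
  ∫ t in Set.Ioi (0 : ℝ), b (z x ξ t) * zdot z x ξ t i * zdot z x ξ t j

/-- Builds the vector `ξ = (ξ¹, ξ′)` from `ξ¹ = s` and `ξ′`. -/
def extv {n : ℕ} [NeZero n] (s : ℝ) (ξ' : {i : Fin n // i ≠ 0} → ℝ) : Fin n → ℝ :=
  fun i => if h : i = 0 then s else ξ' ⟨i, h⟩

/-- The truncation `ξ′ = (ξ², …, ξⁿ)` of `ξ`. -/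
def restr {n : ℕ} [NeZero n] (ξ : Fin n → ℝ) : {i : Fin n // i ≠ 0} → ℝ :=
  fun i => ξ (i : Fin n)

/-- The (generalized) Fourier transform of `w(x, ·, ξ′)` in the variable `ξ¹`. -/
noncomputable def fourier1 {n : ℕ} [NeZero n] (w : (Fin n → ℝ) → (Fin n → ℝ) → ℝ)
    (x : Fin n → ℝ) (η : ℝ) (ξ' : {i : Fin n // i ≠ 0} → ℝ) : ℂ :=
  ∫ s : ℝ, (w x (extv s ξ') : ℂ) * Complex.exp (-(Complex.I * (s : ℂ) * (η : ℂ)))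

/-- `|ξ|_g = (Σ_{i,j} g_{ij}(x) ξ^i ξ^j)^{1/2}`. -/
noncomputable def normg {n : ℕ} (g : (Fin n → ℝ) → Matrix (Fin n) (Fin n) ℝ)
    (x ξ : Fin n → ℝ) : ℝ :=
  Real.sqrt (∑ i, ∑ j, g x i j * ξ i * ξ j)

/-- The Euclidean norm of `ξ ∈ ℝⁿ`. -/
noncomputable def eunorm {n : ℕ} (ξ : Fin n → ℝ) : ℝ := Real.sqrt (∑ i, ξ i ^ 2)

/-- The Euclidean norm of `ξ′ = (ξ²,…,ξⁿ)`. -/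
noncomputable def eunorm' {n : ℕ} [NeZero n] (ξ' : {i : Fin n // i ≠ 0} → ℝ) : ℝ :=
  Real.sqrt (∑ i, ξ' i ^ 2)

/-- The open half-line `Δ_η^ρ = {η : ρ η > 0}`. -/
def deltaSet (ρ : ℝ) : Set ℝ := {η : ℝ | 0 < ρ * η}

/-- The closed half-line `Δ̄_η^ρ = {η : ρ η ≥ 0}`. -/
def deltaSetCl (ρ : ℝ) : Set ℝ := {η : ℝ | 0 ≤ ρ * η}


lemma pd_eq_fderiv {n : ℕ} {f : (Fin n → ℝ) → ℝ} {x : Fin n → ℝ} (j : Fin n)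
    (h : DifferentiableAt ℝ f x) : pd j f x = fderiv ℝ f x (Pi.single j 1) :=
  h.lineDeriv_eq_fderiv

lemma pd_const {n : ℕ} (j : Fin n) (c : ℝ) (x : Fin n → ℝ) :
    pd j (fun _ : Fin n → ℝ => c) x = 0 := by
  rw [pd_eq_fderiv j (differentiableAt_const c), fderiv_fun_const]
  simp

lemma continuous_pd {n : ℕ} (j : Fin n) {f : (Fin n → ℝ) → ℝ} (hf : ContDiff ℝ 6 f) :
    Continuous (pd j f) := by
  have h : pd j f = fun x => fderiv ℝ f x (Pi.single j 1) :=
    funext fun x => (hf.differentiable (by norm_num)).differentiableAt.lineDeriv_eq_fderiv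
  rw [h]
  exact (hf.continuous_fderiv (by norm_num)).clm_apply continuous_const

lemma continuous_g {n : ℕ} {g : (Fin n → ℝ) → Matrix (Fin n) (Fin n) ℝ}
    (hg_smooth : ∀ i j : Fin n, ContDiff ℝ 6 fun x => g x i j) :
    Continuous g := by
  apply continuous_pi; intro i; apply continuous_pi; intro j
  exact (hg_smooth i j).continuous

lemma continuous_ginv_entry {n : ℕ} {g : (Fin n → ℝ) → Matrix (Fin n) (Fin n) ℝ}
    (hg_smooth : ∀ i j : Fin n, ContDiff ℝ 6 fun x => g x i j)
    (hg_pos : ∀ x, (g x).PosDef) (s l : Fin n) :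
    Continuous fun x => (g x)⁻¹ s l := by
  have hdet : Continuous fun x => (g x).det := (continuous_g hg_smooth).matrix_det
  have hadj : Continuous fun x => (g x).adjugate s l :=
    (((continuous_g hg_smooth).matrix_adjugate).matrix_elem s l)
  have h : (fun x => (g x)⁻¹ s l) = fun x => ((g x).det)⁻¹ * (g x).adjugate s l := by
    funext x
    rw [Matrix.inv_def, Matrix.smul_apply, Ring.inverse_eq_inv', smul_eq_mul]
  rw [h]
  apply Continuous.mul _ hadj
  exact continuous_iff_continuousAt.2 fun x => (hdet.continuousAt).inv₀ (hg_pos x).det_pos.ne'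

lemma continuous_christoffel {n : ℕ} {g : (Fin n → ℝ) → Matrix (Fin n) (Fin n) ℝ}
    (hg_smooth : ∀ i j : Fin n, ContDiff ℝ 6 fun x => g x i j)
    (hg_pos : ∀ x, (g x).PosDef) (s j k : Fin n) :
    Continuous (christoffel g s j k) := by
  unfold christoffel
  apply Continuous.mul continuous_const
  apply continuous_finset_sum; intro l _
  exact (continuous_ginv_entry hg_smooth hg_pos s l).mul
    (((continuous_pd j (hg_smooth k l)).add (continuous_pd k (hg_smooth j l))).sub
      (continuous_pd l (hg_smooth j k)))


lemma continuous_eunorm {n : ℕ} : Continuous (eunorm (n := n)) := by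
  unfold eunorm
  exact Real.continuous_sqrt.comp (continuous_finset_sum _ fun i _ =>
    (continuous_apply i).pow 2)

lemma abs_le_eunorm {n : ℕ} (ξ : Fin n → ℝ) (i : Fin n) : |ξ i| ≤ eunorm ξ := by
  unfold eunorm
  rw [← Real.sqrt_sq_eq_abs]
  apply Real.sqrt_le_sqrt
  exact Finset.single_le_sum (f := fun j => ξ j ^ 2) (fun j _ => sq_nonneg _) (Finset.mem_univ i)

lemma isCompact_eunorm_le {n : ℕ} (R : ℝ) : IsCompact {x : Fin n → ℝ | eunorm x ≤ R} := by
  apply Metric.isCompact_of_isClosed_isBounded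
  · exact isClosed_le (continuous_eunorm) continuous_const
  · rw [isBounded_iff_forall_norm_le]
    refine ⟨max R 0, fun x hx => ?_⟩
    rw [pi_norm_le_iff_of_nonneg (le_max_right _ _)]
    intro i
    calc ‖x i‖ = |x i| := rfl
      _ ≤ eunorm x := abs_le_eunorm x i
      _ ≤ max R 0 := le_trans hx (le_max_left _ _)

lemma pd_zero_outside {n : ℕ} {g : (Fin n → ℝ) → Matrix (Fin n) (Fin n) ℝ}
    {R : ℝ} (hg_eucl : ∀ x : Fin n → ℝ, R < eunorm x → g x = 1)
    {x : Fin n → ℝ} (hx : R < eunorm x) (j k l : Fin n) :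
    pd j (fun y => g y k l) x = 0 := by
  have hopen : IsOpen {y : Fin n → ℝ | R < eunorm y} :=
    isOpen_lt continuous_const continuous_eunorm
  have hev : (fun y => g y k l) =ᶠ[𝓝 x] fun _ => (1 : Matrix (Fin n) (Fin n) ℝ) k l := by
    filter_upwards [hopen.mem_nhds hx] with y hy
    rw [hg_eucl y hy]
  have hdiff : DifferentiableAt ℝ (fun y => g y k l) x := by
    exact (differentiableAt_const _).congr_of_eventuallyEq hev
  rw [pd_eq_fderiv j hdiff, hev.fderiv_eq, fderiv_fun_const]
  simp

lemma christoffel_zero_outside {n : ℕ} {g : (Fin n → ℝ) → Matrix (Fin n) (Fin n) ℝ}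
    {R : ℝ} (hg_eucl : ∀ x : Fin n → ℝ, R < eunorm x → g x = 1)
    {x : Fin n → ℝ} (hx : R < eunorm x) (s j k : Fin n) :
    christoffel g s j k x = 0 := by
  unfold christoffel
  rw [Finset.sum_eq_zero, mul_zero]
  intro l _
  rw [pd_zero_outside hg_eucl hx, pd_zero_outside hg_eucl hx, pd_zero_outside hg_eucl hx]
  ring

lemma christoffel_bounded {n : ℕ} {g : (Fin n → ℝ) → Matrix (Fin n) (Fin n) ℝ}
    (hg_smooth : ∀ i j : Fin n, ContDiff ℝ 6 fun x => g x i j)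
    (hg_pos : ∀ x, (g x).PosDef)
    (hg_eucl : ∃ R : ℝ, ∀ x : Fin n → ℝ, R < eunorm x → g x = 1) :
    ∃ C : ℝ, 0 ≤ C ∧ ∀ (s j k : Fin n) (x : Fin n → ℝ), |christoffel g s j k x| ≤ C := by
  obtain ⟨R, hR⟩ := hg_eucl
  set R' := max R 0 with hR'
  set K := {x : Fin n → ℝ | eunorm x ≤ R'} with hK
  have hKc : IsCompact K := isCompact_eunorm_le R'
  have hKne : K.Nonempty := by
    refine ⟨0, ?_⟩
    simp only [hK, Set.mem_setOf_eq, eunorm]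
    simp [Real.sqrt_eq_zero']
    positivity
  set F := fun x => ∑ s : Fin n, ∑ j : Fin n, ∑ k : Fin n, |christoffel g s j k x| with hF
  have hFc : Continuous F := by
    apply continuous_finset_sum; intro s _
    apply continuous_finset_sum; intro j _
    apply continuous_finset_sum; intro k _
    exact (continuous_christoffel hg_smooth hg_pos s j k).abs
  obtain ⟨x₀, _, hx₀⟩ := hKc.exists_isMaxOn hKne hFc.continuousOn
  have hFnonneg : ∀ x, 0 ≤ F x := fun x =>
    Finset.sum_nonneg fun s _ => Finset.sum_nonneg fun j _ => Finset.sum_nonneg fun k _ =>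
      abs_nonneg _
  refine ⟨F x₀, hFnonneg x₀, fun s j k x => ?_⟩
  have hle : ∀ y, |christoffel g s j k y| ≤ F y := by
    intro y
    calc |christoffel g s j k y|
        ≤ ∑ k' : Fin n, |christoffel g s j k' y| :=
          Finset.single_le_sum (f := fun k' => |christoffel g s j k' y|) (fun k' _ => abs_nonneg _) (Finset.mem_univ k)
      _ ≤ ∑ j' : Fin n, ∑ k' : Fin n, |christoffel g s j' k' y| :=
          Finset.single_le_sum (f := fun j' => ∑ k' : Fin n, |christoffel g s j' k' y|)
            (fun j' _ => Finset.sum_nonneg fun k' _ => abs_nonneg _) (Finset.mem_univ j)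
      _ ≤ F y :=
          Finset.single_le_sum (f := fun s' => ∑ j' : Fin n, ∑ k' : Fin n, |christoffel g s' j' k' y|)
            (fun s' _ => Finset.sum_nonneg fun j' _ => Finset.sum_nonneg fun k' _ => abs_nonneg _)
            (Finset.mem_univ s)
  by_cases hx : x ∈ K
  · exact le_trans (hle x) (hx₀ hx)
  · have : R < eunorm x := by
      simp only [hK, Set.mem_setOf_eq, not_le] at hx
      exact lt_of_le_of_lt (le_max_left R 0) hx
    rw [christoffel_zero_outside hR this]
    simpa using hFnonneg x₀


section
open Matrix
lemma quad_eq_dot {n : ℕ} (M : Matrix (Fin n) (Fin n) ℝ) (ξ : Fin n → ℝ) :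
    ∑ i, ∑ j, M i j * ξ i * ξ j = dotProduct (star ξ) (M *ᵥ ξ) := by
  simp only [star_trivial, dotProduct, Matrix.mulVec, dotProduct, Finset.mul_sum]
  apply Finset.sum_congr rfl; intro i _
  apply Finset.sum_congr rfl; intro j _
  ring

lemma quad_pos {n : ℕ} {g : (Fin n → ℝ) → Matrix (Fin n) (Fin n) ℝ}
    (hg_pos : ∀ x, (g x).PosDef) (x : Fin n → ℝ) {ξ : Fin n → ℝ} (hξ : ξ ≠ 0) :
    0 < ∑ i, ∑ j, g x i j * ξ i * ξ j := by
  rw [quad_eq_dot]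
  exact (hg_pos x).dotProduct_mulVec_pos hξ

end

lemma elliptic {n : ℕ} [NeZero n] {g : (Fin n → ℝ) → Matrix (Fin n) (Fin n) ℝ}
    (hg_smooth : ∀ i j : Fin n, ContDiff ℝ 6 fun x => g x i j)
    (hg_pos : ∀ x, (g x).PosDef)
    (hg_eucl : ∃ R : ℝ, ∀ x : Fin n → ℝ, R < eunorm x → g x = 1) :
    ∃ lam : ℝ, 0 < lam ∧ lam ≤ 1 ∧
      ∀ (x ξ : Fin n → ℝ), lam * (∑ i, ξ i ^ 2) ≤ ∑ i, ∑ j, g x i j * ξ i * ξ j := by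
  obtain ⟨R, hR⟩ := hg_eucl
  set R' := max R 0 with hR'
  set K := {x : Fin n → ℝ | eunorm x ≤ R'} with hK
  set Sp := {ξ : Fin n → ℝ | ∑ i, ξ i ^ 2 = 1} with hSp
  have hSpc : IsCompact Sp := by
    apply Metric.isCompact_of_isClosed_isBounded
    · exact isClosed_eq (continuous_finset_sum _ fun i _ => (continuous_apply i).pow 2)
        continuous_const
    · rw [isBounded_iff_forall_norm_le]
      refine ⟨1, fun ξ hξ => ?_⟩
      rw [pi_norm_le_iff_of_nonneg zero_le_one]
      intro i
      have h1 : ξ i ^ 2 ≤ 1 := by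
        rw [← hξ]
        exact Finset.single_le_sum (f := fun j => ξ j ^ 2) (fun j _ => sq_nonneg _)
          (Finset.mem_univ i)
      calc ‖ξ i‖ = |ξ i| := rfl
        _ ≤ 1 := by nlinarith [abs_nonneg (ξ i), sq_abs (ξ i)]
  have hKc : IsCompact K := isCompact_eunorm_le R'
  have hQc : Continuous fun p : (Fin n → ℝ) × (Fin n → ℝ) =>
      ∑ i, ∑ j, g p.1 i j * p.2 i * p.2 j := by
    apply continuous_finset_sum; intro i _
    apply continuous_finset_sum; intro j _
    exact (((hg_smooth i j).continuous.comp continuous_fst).mul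
      ((continuous_apply i).comp continuous_snd)).mul ((continuous_apply j).comp continuous_snd)
  have hSne : (K ×ˢ Sp).Nonempty := by
    refine ⟨(0, Pi.single 0 1), ?_, ?_⟩
    · simp only [hK, Set.mem_setOf_eq, eunorm]
      have : ∑ i : Fin n, (0:ℝ) ^ 2 = 0 := by simp
      simp [this, Real.sqrt_eq_zero', hR']
    · simp only [hSp, Set.mem_setOf_eq]
      rw [Finset.sum_eq_single 0]
      · simp
      · intro b _ hb; simp [Pi.single_eq_of_ne hb]
      · simp
  obtain ⟨p₀, hp₀S, hmin⟩ := (hKc.prod hSpc).exists_isMinOn hSne hQc.continuousOn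
  have hp₀2 : p₀.2 ≠ 0 := by
    intro h
    have : (1:ℝ) = 0 := by
      have := hp₀S.2
      simp only [hSp, Set.mem_setOf_eq, h] at this
      simpa using this.symm
    norm_num at this
  set m := ∑ i, ∑ j, g p₀.1 i j * p₀.2 i * p₀.2 j with hm
  have hmpos : 0 < m := quad_pos hg_pos p₀.1 hp₀2
  refine ⟨min m 1, lt_min hmpos one_pos, min_le_right _ _, fun x ξ => ?_⟩
  by_cases hx : eunorm x ≤ R'
  · by_cases hξ : ξ = 0
    · simp [hξ]
    · set c := Real.sqrt (∑ i, ξ i ^ 2) with hc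
      have hsum_pos : 0 < ∑ i, ξ i ^ 2 := by
        rcases Function.ne_iff.1 hξ with ⟨i, hi⟩
        have : 0 < ξ i ^ 2 := (sq_nonneg _).lt_of_ne (Ne.symm (pow_ne_zero 2 hi))
        have hle : ξ i ^ 2 ≤ ∑ i, ξ i ^ 2 :=
          Finset.single_le_sum (f := fun j => ξ j ^ 2) (fun j _ => sq_nonneg _)
            (Finset.mem_univ i)
        linarith
      have hcpos : 0 < c := Real.sqrt_pos.2 hsum_pos
      have hc2 : c ^ 2 = ∑ i, ξ i ^ 2 := Real.sq_sqrt hsum_pos.le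
      set η := fun i => ξ i / c with hη
      have hηS : η ∈ Sp := by
        simp only [hSp, Set.mem_setOf_eq, hη]
        rw [Finset.sum_congr rfl (fun i _ => div_pow (ξ i) c 2), ← Finset.sum_div, ← hc2]
        field_simp
      have hmem : (x, η) ∈ K ×ˢ Sp := ⟨hx, hηS⟩
      have hQη : m ≤ ∑ i, ∑ j, g x i j * η i * η j := hmin hmem
      have hexp : ∑ i, ∑ j, g x i j * ξ i * ξ j
          = c ^ 2 * ∑ i, ∑ j, g x i j * η i * η j := by
        rw [Finset.mul_sum]
        apply Finset.sum_congr rfl; intro i _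
        rw [Finset.mul_sum]
        apply Finset.sum_congr rfl; intro j _
        simp only [hη]
        field_simp
      calc min m 1 * ∑ i, ξ i ^ 2 ≤ m * ∑ i, ξ i ^ 2 :=
            mul_le_mul_of_nonneg_right (min_le_left _ _) hsum_pos.le
        _ = m * c ^ 2 := by rw [hc2]
        _ ≤ (∑ i, ∑ j, g x i j * η i * η j) * c ^ 2 :=
            mul_le_mul_of_nonneg_right hQη (by positivity)
        _ = ∑ i, ∑ j, g x i j * ξ i * ξ j := by rw [hexp]; ring
  · have hgx : g x = 1 := hR x (lt_of_le_of_lt (le_max_left R 0) (not_le.1 hx))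
    have : ∑ i, ∑ j, g x i j * ξ i * ξ j = ∑ i, ξ i ^ 2 := by
      rw [hgx]
      apply Finset.sum_congr rfl; intro i _
      rw [Finset.sum_eq_single i]
      · simp [Matrix.one_apply, sq]
      · intro b _ hb; simp [Matrix.one_apply, Ne.symm hb]
      · simp
    rw [this]
    have h0 : 0 ≤ ∑ i, ξ i ^ 2 := Finset.sum_nonneg fun i _ => sq_nonneg _
    nlinarith [min_le_right m 1]


section perm
variable {n : ℕ}

lemma sum3_12 (F : Fin n → Fin n → Fin n → ℝ) :
    ∑ i, ∑ j, ∑ k, F i j k = ∑ i, ∑ j, ∑ k, F j i k := Finset.sum_comm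

lemma sum3_23 (F : Fin n → Fin n → Fin n → ℝ) :
    ∑ i, ∑ j, ∑ k, F i j k = ∑ i, ∑ j, ∑ k, F i k j :=
  Finset.sum_congr rfl fun _ _ => Finset.sum_comm

lemma sum3_rot (F : Fin n → Fin n → Fin n → ℝ) :
    ∑ i, ∑ j, ∑ k, F i j k = ∑ i, ∑ j, ∑ k, F j k i := by
  rw [sum3_23 F]
  exact sum3_12 _

lemma sum3_rot' (F : Fin n → Fin n → Fin n → ℝ) :
    ∑ i, ∑ j, ∑ k, F i j k = ∑ i, ∑ j, ∑ k, F k i j := by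
  rw [sum3_rot F]
  exact sum3_rot _

lemma sum3_13 (F : Fin n → Fin n → Fin n → ℝ) :
    ∑ i, ∑ j, ∑ k, F i j k = ∑ i, ∑ j, ∑ k, F k j i := by
  rw [sum3_rot F]
  exact sum3_23 _

end perm

section lower
variable {n : ℕ} {g : (Fin n → ℝ) → Matrix (Fin n) (Fin n) ℝ}

lemma lower_christoffel (hg_symm : ∀ x, (g x).IsSymm) (hg_pos : ∀ x, (g x).PosDef)
    (y : Fin n → ℝ) (j p q : Fin n) :
    ∑ i, g y i j * christoffel g i p q y
      = (1/2) * (pd p (fun z => g z q j) y + pd q (fun z => g z p j) y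
          - pd j (fun z => g z p q) y) := by
  have hsymm : ∀ a b, g y a b = g y b a := fun a b => Matrix.IsSymm.ext_iff.mp (hg_symm y) b a
  have hinv : (g y) * (g y)⁻¹ = 1 :=
    Matrix.mul_nonsing_inv _ (isUnit_iff_ne_zero.2 (hg_pos y).det_pos.ne')
  set c : Fin n → ℝ := fun m => pd p (fun z => g z q m) y + pd q (fun z => g z p m) y
      - pd m (fun z => g z p q) y with hc
  calc ∑ i, g y i j * christoffel g i p q y
      = ∑ i, ∑ m, (1/2) * (g y j i * (g y)⁻¹ i m * c m) := by
        refine Finset.sum_congr rfl fun i _ => ?_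
        rw [hsymm i j]
        unfold christoffel
        rw [Finset.mul_sum, Finset.mul_sum]
        exact Finset.sum_congr rfl fun m _ => by ring
    _ = ∑ m, ∑ i, (1/2) * (g y j i * (g y)⁻¹ i m * c m) := Finset.sum_comm
    _ = ∑ m, (1/2) * ((∑ i, g y j i * (g y)⁻¹ i m) * c m) := by
        refine Finset.sum_congr rfl fun m _ => ?_
        rw [Finset.sum_mul, Finset.mul_sum]
    _ = ∑ m, (1/2) * ((1 : Matrix (Fin n) (Fin n) ℝ) j m * c m) := by
        refine Finset.sum_congr rfl fun m _ => ?_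
        rw [← Matrix.mul_apply, hinv]
    _ = (1/2) * c j := by
        rw [Finset.sum_eq_single j]
        · simp [Matrix.one_apply]
        · intro b _ hb; simp [Matrix.one_apply, Ne.symm hb]
        · simp

lemma energy_alg (hg_symm : ∀ x, (g x).IsSymm) (hg_pos : ∀ x, (g x).PosDef)
    (y v : Fin n → ℝ) :
    ∑ i, ∑ j, (((∑ k, v k * pd k (fun z => g z i j) y) * v i
        + g y i j * (-(∑ p, ∑ q, christoffel g i p q y * v p * v q))) * v j
      + g y i j * v i * (-(∑ p, ∑ q, christoffel g j p q y * v p * v q))) = 0 := by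
  have hsymm : ∀ a b, g y a b = g y b a := fun a b => Matrix.IsSymm.ext_iff.mp (hg_symm y) b a
  set P : Fin n → Fin n → Fin n → ℝ := fun k i j => pd k (fun z => g z i j) y with hP
  set X : Fin n → ℝ := fun i => -(∑ p, ∑ q, christoffel g i p q y * v p * v q) with hX
  set S : ℝ := ∑ i, ∑ j, ∑ k, P i j k * v i * v j * v k with hS
  have claimA : ∑ i, ∑ j, (∑ k, v k * P k i j) * v i * v j = S := by
    have h1 : ∑ i, ∑ j, (∑ k, v k * P k i j) * v i * v j
        = ∑ i, ∑ j, ∑ k, P k i j * v k * v i * v j :=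
      Finset.sum_congr rfl fun i _ => Finset.sum_congr rfl fun j _ => by
        rw [Finset.sum_mul, Finset.sum_mul]
        exact Finset.sum_congr rfl fun k _ => by ring
    rw [h1, hS, sum3_rot' (fun i j k => P i j k * v i * v j * v k)]
  have claimB : ∑ j, (∑ i, g y i j * X i) * v j = -(1/2) * S := by
    have key : ∀ j, ∑ i, g y i j * X i
        = -(∑ p, ∑ q, (∑ i, g y i j * christoffel g i p q y) * v p * v q) := by
      intro j
      have s1 : ∀ i, g y i j * X i
          = ∑ p, ∑ q, -(g y i j * christoffel g i p q y * v p * v q) := by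
        intro i
        rw [hX]
        simp only [mul_neg, Finset.mul_sum, Finset.sum_neg_distrib]
        rw [neg_inj]
        refine Finset.sum_congr rfl fun p _ => Finset.sum_congr rfl fun q _ => by ring
      rw [Finset.sum_congr rfl fun i _ => s1 i]
      rw [sum3_rot' (fun i p q => -(g y i j * christoffel g i p q y * v p * v q))]
      simp only [Finset.sum_neg_distrib]
      rw [neg_inj]
      refine Finset.sum_congr rfl fun p _ => Finset.sum_congr rfl fun q _ => ?_
      rw [Finset.sum_mul, Finset.sum_mul]
    have key2 : ∀ j, -(∑ p, ∑ q, (∑ i, g y i j * christoffel g i p q y) * v p * v q) * v j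
        = -((1/2) * ∑ p, ∑ q, (P p q j + P q p j - P j p q) * v p * v q * v j) := by
      intro j
      rw [neg_mul, neg_inj, Finset.sum_mul, Finset.mul_sum]
      refine Finset.sum_congr rfl fun p _ => ?_
      rw [Finset.sum_mul, Finset.mul_sum]
      refine Finset.sum_congr rfl fun q _ => ?_
      rw [lower_christoffel hg_symm hg_pos y j p q]
      simp only [hP]
      ring
    rw [Finset.sum_congr rfl fun j _ => by rw [key j, key2 j]]
    have hT1 : ∑ j, ∑ p, ∑ q, P p q j * v p * v q * v j = S := by
      rw [hS, sum3_rot (fun i j k => P i j k * v i * v j * v k)]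
    have hT2 : ∑ j, ∑ p, ∑ q, P q p j * v p * v q * v j = S := by
      rw [hS, sum3_13 (fun i j k => P i j k * v i * v j * v k)]
      exact Finset.sum_congr rfl fun j _ => Finset.sum_congr rfl fun p _ =>
        Finset.sum_congr rfl fun q _ => by ring
    have hT3 : ∑ j, ∑ p, ∑ q, P j p q * v p * v q * v j = S := by
      rw [hS]
      exact Finset.sum_congr rfl fun j _ => Finset.sum_congr rfl fun p _ =>
        Finset.sum_congr rfl fun q _ => by ring
    have split : ∑ j, -((1/2) * ∑ p, ∑ q, (P p q j + P q p j - P j p q) * v p * v q * v j)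
        = -((1/2) * ((∑ j, ∑ p, ∑ q, P p q j * v p * v q * v j)
            + (∑ j, ∑ p, ∑ q, P q p j * v p * v q * v j)
            - (∑ j, ∑ p, ∑ q, P j p q * v p * v q * v j))) := by
      simp only [add_mul, sub_mul, Finset.sum_add_distrib, Finset.sum_sub_distrib,
        Finset.mul_sum, Finset.sum_neg_distrib]
      rw [neg_inj, ← Finset.mul_sum]
      congr 1
      rw [Finset.sum_sub_distrib, Finset.sum_add_distrib]
    rw [split, hT1, hT2, hT3]
    ring
  have claimC : ∑ i, ∑ j, g y i j * v i * X j = -(1/2) * S := by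
    have h1 : ∑ i, ∑ j, g y i j * v i * X j = ∑ i, (∑ j, g y j i * X j) * v i := by
      refine Finset.sum_congr rfl fun i _ => ?_
      rw [Finset.sum_mul]
      refine Finset.sum_congr rfl fun j _ => ?_
      rw [hsymm i j]
      ring
    rw [h1]
    exact claimB
  calc ∑ i, ∑ j, (((∑ k, v k * P k i j) * v i + g y i j * X i) * v j + g y i j * v i * X j)
      = (∑ i, ∑ j, (∑ k, v k * P k i j) * v i * v j)
        + (∑ i, ∑ j, (g y i j * X i) * v j)
        + (∑ i, ∑ j, g y i j * v i * X j) := by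
        simp only [add_mul, Finset.sum_add_distrib]
    _ = S + (∑ j, (∑ i, g y i j * X i) * v j) + (∑ i, ∑ j, g y i j * v i * X j) := by
        rw [claimA, Finset.sum_comm (f := fun i j => (g y i j * X i) * v j)]
        congr 2
        exact Finset.sum_congr rfl fun j _ => by rw [Finset.sum_mul]
    _ = S + -(1/2) * S + -(1/2) * S := by rw [claimB, claimC]
    _ = 0 := by ring

end lower

section deriv
variable {n : ℕ} {g : (Fin n → ℝ) → Matrix (Fin n) (Fin n) ℝ}

lemma fderiv_apply_eq_sum_pd {f : (Fin n → ℝ) → ℝ} {x : Fin n → ℝ}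
    (hf : DifferentiableAt ℝ f x) (v : Fin n → ℝ) :
    fderiv ℝ f x v = ∑ k, v k * pd k f x := by
  have hv : v = ∑ k, v k • (Pi.single k 1 : Fin n → ℝ) := by
    funext j
    simp [Finset.sum_apply, Pi.single_apply, Finset.sum_ite_eq']
  conv_lhs => rw [hv]
  rw [map_sum]
  refine Finset.sum_congr rfl fun k _ => ?_
  rw [_root_.map_smul, pd_eq_fderiv k hf, smul_eq_mul]

lemma hasDerivAt_comp_metric {w : ℝ → Fin n → ℝ} {u : Fin n → ℝ} {t : ℝ}
    (hw : HasDerivAt w u t) {f : (Fin n → ℝ) → ℝ} (hf : ContDiff ℝ 6 f) :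
    HasDerivAt (fun s => f (w s)) (∑ k, u k * pd k f (w t)) t := by
  have hdf : DifferentiableAt ℝ f (w t) :=
    (hf.differentiable (by norm_num)).differentiableAt
  have h := hdf.hasFDerivAt.comp_hasDerivAt t hw
  rw [fderiv_apply_eq_sum_pd hdf u] at h
  exact h

lemma geodesic_diff {w : ℝ → Fin n → ℝ} (hw : IsGeodesic g w) (i : Fin n) :
    Differentiable ℝ (deriv fun s => w s i) := by
  have h2 : ContDiff ℝ ((1:ℕ)+1) fun s => w s i := by exact_mod_cast hw.1 i
  exact ((contDiff_succ_iff_deriv.mp h2).2.2).differentiable (by simp)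

lemma energy_conserved (hg_smooth : ∀ i j : Fin n, ContDiff ℝ 6 fun x => g x i j)
    (hg_symm : ∀ x, (g x).IsSymm) (hg_pos : ∀ x, (g x).PosDef)
    {w : ℝ → Fin n → ℝ} (hw : IsGeodesic g w) (t : ℝ) :
    (∑ i, ∑ j, g (w t) i j * deriv (fun s => w s i) t * deriv (fun s => w s j) t)
      = ∑ i, ∑ j, g (w 0) i j * deriv (fun s => w s i) 0 * deriv (fun s => w s j) 0 := by
  set u : Fin n → ℝ → ℝ := fun i τ => deriv (fun s => w s i) τ with hu
  set E : ℝ → ℝ := fun τ => ∑ i, ∑ j, g (w τ) i j * u i τ * u j τ with hE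
  have hwd : ∀ i, Differentiable ℝ fun s => w s i :=
    fun i => (hw.1 i).differentiable (by norm_num)
  have hwpi : ∀ τ, HasDerivAt w (fun i => u i τ) τ :=
    fun τ => hasDerivAt_pi.2 fun i => ((hwd i) τ).hasDerivAt
  have hud : ∀ i τ, HasDerivAt (u i) (deriv (u i) τ) τ :=
    fun i τ => ((geodesic_diff hw i) τ).hasDerivAt
  have hE' : ∀ τ, HasDerivAt E
      (∑ i, ∑ j, (((∑ k, u k τ * pd k (fun y => g y i j) (w τ)) * u i τ
          + g (w τ) i j * deriv (u i) τ) * u j τ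
        + g (w τ) i j * u i τ * deriv (u j) τ)) τ := by
    intro τ
    apply HasDerivAt.fun_sum
    intro i _
    apply HasDerivAt.fun_sum
    intro j _
    exact ((hasDerivAt_comp_metric (hwpi τ) (hg_smooth i j)).mul (hud i τ)).mul (hud j τ)
  have hE0 : ∀ τ, HasDerivAt E 0 τ := by
    intro τ
    have halg := energy_alg hg_symm hg_pos (w τ) (fun i => u i τ)
    have hrw : ∀ i, deriv (u i) τ
        = -(∑ p, ∑ q, christoffel g i p q (w τ) * u p τ * u q τ) := by
      intro i
      have := hw.2 τ i
      simpa [hu] using this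
    have := hE' τ
    rw [show (∑ i, ∑ j, (((∑ k, u k τ * pd k (fun y => g y i j) (w τ)) * u i τ
          + g (w τ) i j * deriv (u i) τ) * u j τ
        + g (w τ) i j * u i τ * deriv (u j) τ)) = 0 from by
      rw [Finset.sum_congr rfl fun i _ => Finset.sum_congr rfl fun j _ => by
        rw [hrw i, hrw j]]
      exact halg] at this
    exact this
  have hEdiff : Differentiable ℝ E := fun τ => (hE0 τ).differentiableAt
  have hEderiv : ∀ τ, deriv E τ = 0 := fun τ => (hE0 τ).deriv
  exact is_const_of_deriv_eq_zero hEdiff hEderiv t 0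

end deriv

section gron
variable {n : ℕ} {g : (Fin n → ℝ) → Matrix (Fin n) (Fin n) ℝ}

lemma christoffel_zero00 [NeZero n]
    (hg_semi : ∀ x : Fin n → ℝ, g x 0 0 = 1 ∧ ∀ i : Fin n, i ≠ 0 → g x 0 i = 0)
    (k : Fin n) (x : Fin n → ℝ) : christoffel g k 0 0 x = 0 := by
  unfold christoffel
  rw [Finset.sum_eq_zero, mul_zero]
  intro l _
  have h1 : (fun y => g y 0 l) = fun _ : Fin n → ℝ => (if l = 0 then (1:ℝ) else 0) := by
    funext y
    by_cases hl : l = 0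
    · simp [hl, (hg_semi y).1]
    · simp [hl, (hg_semi y).2 l hl]
  have h2 : (fun y => g y 0 0) = fun _ : Fin n → ℝ => (1:ℝ) := funext fun y => (hg_semi y).1
  rw [h1, h2, pd_const, pd_const]
  ring

lemma key_bound [NeZero n]
    (hg_smooth : ∀ i j : Fin n, ContDiff ℝ 6 fun x => g x i j)
    (hg_symm : ∀ x, (g x).IsSymm) (hg_pos : ∀ x, (g x).PosDef)
    (hg_eucl : ∃ R : ℝ, ∀ x : Fin n → ℝ, R < eunorm x → g x = 1)
    (hg_semi : ∀ x : Fin n → ℝ, g x 0 0 = 1 ∧ ∀ i : Fin n, i ≠ 0 → g x 0 i = 0) :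
    ∃ K : ℝ, 0 ≤ K ∧ ∀ (w : ℝ → Fin n → ℝ), IsGeodesic g w →
    (∑ i, ∑ j, g (w 0) i j * deriv (fun s => w s i) 0 * deriv (fun s => w s j) 0) = 1 →
    ∀ d, 0 ≤ d → ∀ t ∈ Set.Icc (0:ℝ) d, ∀ k : Fin n, k ≠ 0 →
    |deriv (fun s => w s k) t| ≤
      Real.sqrt (∑ i : {i : Fin n // i ≠ 0}, (deriv (fun s => w s (i:Fin n)) 0)^2)
        * Real.exp (K * d) := by
  obtain ⟨lam, hlam0, hlam1, hlam⟩ := elliptic hg_smooth hg_pos hg_eucl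
  obtain ⟨C, hC0, hC⟩ := christoffel_bounded hg_smooth hg_pos hg_eucl
  set c₁ : ℝ := Real.sqrt lam⁻¹ with hc₁
  have hc₁0 : 0 < c₁ := Real.sqrt_pos.2 (by positivity)
  set K : ℝ := (n:ℝ) * ((n:ℝ)^2 * (C * c₁)) with hK
  have hK0 : 0 ≤ K := by positivity
  refine ⟨K, hK0, ?_⟩
  intro w hw hE1 d hd t ht k hk
  set u : Fin n → ℝ → ℝ := fun i τ => deriv (fun s => w s i) τ with hu
  -- energy is 1 at all times
  have hE : ∀ τ, ∑ i, ∑ j, g (w τ) i j * u i τ * u j τ = 1 := by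
    intro τ
    rw [energy_conserved hg_smooth hg_symm hg_pos hw τ]
    exact hE1
  -- all components bounded by c₁
  have hall : ∀ τ (p : Fin n), |u p τ| ≤ c₁ := by
    intro τ p
    have h1 : lam * (∑ i, u i τ ^ 2) ≤ 1 := by
      rw [← hE τ]; exact hlam (w τ) (fun i => u i τ)
    have h2 : u p τ ^ 2 ≤ lam⁻¹ := by
      have h3 : u p τ ^ 2 ≤ ∑ i, u i τ ^ 2 :=
        Finset.single_le_sum (f := fun i => u i τ ^ 2) (fun i _ => sq_nonneg _)
          (Finset.mem_univ p)
      have h4 : (∑ i, u i τ ^ 2) ≤ lam⁻¹ := by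
        rw [← one_div, le_div_iff₀ hlam0]
        linarith
      linarith
    rw [hc₁, ← Real.sqrt_sq_eq_abs]
    exact Real.sqrt_le_sqrt h2
  -- the reduced velocity vector
  set F : ℝ → EuclideanSpace ℝ {i : Fin n // i ≠ 0} :=
    fun τ => (EuclideanSpace.equiv {i : Fin n // i ≠ 0} ℝ).symm (fun i => u (i:Fin n) τ)
    with hF
  set F' : ℝ → EuclideanSpace ℝ {i : Fin n // i ≠ 0} :=
    fun τ => (EuclideanSpace.equiv {i : Fin n // i ≠ 0} ℝ).symm
      (fun i => deriv (u (i:Fin n)) τ) with hF'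
  have hFd : ∀ τ, HasDerivAt F (F' τ) τ := by
    intro τ
    have h0 : HasDerivAt (fun τ => (fun i : {i : Fin n // i ≠ 0} => u (i:Fin n) τ))
        (fun i : {i : Fin n // i ≠ 0} => deriv (u (i:Fin n)) τ) τ :=
      hasDerivAt_pi.2 fun i => ((geodesic_diff hw (i:Fin n)) τ).hasDerivAt
    exact ((EuclideanSpace.equiv {i : Fin n // i ≠ 0} ℝ).symm.toContinuousLinearMap.hasFDerivAt).comp_hasDerivAt τ h0
  have hnormF : ∀ τ, ‖F τ‖ = Real.sqrt (∑ i : {i : Fin n // i ≠ 0}, (u (i:Fin n) τ)^2) := by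
    intro τ
    rw [EuclideanSpace.norm_eq]
    congr 1
    exact Finset.sum_congr rfl fun i _ => by
      rw [Real.norm_eq_abs, sq_abs]; rfl
  have hcomp_le : ∀ τ (p : Fin n), p ≠ 0 → |u p τ| ≤ ‖F τ‖ := by
    intro τ p hp
    rw [hnormF τ, ← Real.sqrt_sq_eq_abs]
    apply Real.sqrt_le_sqrt
    exact Finset.single_le_sum (f := fun i : {i : Fin n // i ≠ 0} => u (i:Fin n) τ ^ 2)
      (fun i _ => sq_nonneg _) (Finset.mem_univ ⟨p, hp⟩)
  -- bound on the derivative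
  have hbound : ∀ τ, ‖F' τ‖ ≤ K * ‖F τ‖ := by
    intro τ
    set B := ‖F τ‖ with hB
    have hB0 : 0 ≤ B := norm_nonneg _
    have hterm : ∀ (k' p q : Fin n),
        |christoffel g k' p q (w τ) * u p τ * u q τ| ≤ C * c₁ * B := by
      intro k' p q
      rw [abs_mul, abs_mul]
      by_cases hp : p = 0
      · by_cases hq : q = 0
        · rw [hp, hq, christoffel_zero00 hg_semi k' (w τ)]
          simp only [abs_zero, zero_mul]
          positivity
        · gcongr
          · exact hC k' p q (w τ)
          · exact hall τ p
          · exact hcomp_le τ q hq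
      · have h1 : |christoffel g k' p q (w τ)| * |u p τ| * |u q τ| ≤ C * B * c₁ := by
          gcongr
          · exact hC k' p q (w τ)
          · exact hcomp_le τ p hp
          · exact hall τ q
        linarith [h1, show C * B * c₁ = C * c₁ * B from by ring]
    have hder : ∀ k' : Fin n, |deriv (u k') τ| ≤ (n:ℝ)^2 * (C * c₁ * B) := by
      intro k'
      have heq : deriv (u k') τ
          = -∑ p, ∑ q, christoffel g k' p q (w τ) * u p τ * u q τ := hw.2 τ k'
      rw [heq, abs_neg]
      calc |∑ p, ∑ q, christoffel g k' p q (w τ) * u p τ * u q τ|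
          ≤ ∑ p, |∑ q, christoffel g k' p q (w τ) * u p τ * u q τ| :=
            Finset.abs_sum_le_sum_abs _ _
        _ ≤ ∑ _p : Fin n, ∑ _q : Fin n, (C * c₁ * B) := by
            refine Finset.sum_le_sum fun p _ => ?_
            calc |∑ q, christoffel g k' p q (w τ) * u p τ * u q τ|
                ≤ ∑ q, |christoffel g k' p q (w τ) * u p τ * u q τ| :=
                  Finset.abs_sum_le_sum_abs _ _
              _ ≤ ∑ _q : Fin n, (C * c₁ * B) := Finset.sum_le_sum fun q _ => hterm k' p q
        _ = (n:ℝ)^2 * (C * c₁ * B) := by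
            simp [Finset.sum_const, Finset.card_univ, mul_assoc]
            ring
    have hnormF' : ‖F' τ‖ = Real.sqrt (∑ i : {i : Fin n // i ≠ 0}, (deriv (u (i:Fin n)) τ)^2) := by
      rw [EuclideanSpace.norm_eq]
      congr 1
      exact Finset.sum_congr rfl fun i _ => by rw [Real.norm_eq_abs, sq_abs]; rfl
    set M : ℝ := (n:ℝ)^2 * (C * c₁ * B) with hM
    have hM0 : 0 ≤ M := by positivity
    have hcard : (Fintype.card {i : Fin n // i ≠ 0} : ℝ) ≤ (n:ℝ) := by
      have := Fintype.card_subtype_le (fun i : Fin n => i ≠ 0)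
      rw [Fintype.card_fin] at this
      exact_mod_cast this
    calc ‖F' τ‖ = Real.sqrt (∑ i : {i : Fin n // i ≠ 0}, (deriv (u (i:Fin n)) τ)^2) := hnormF'
      _ ≤ Real.sqrt ((Fintype.card {i : Fin n // i ≠ 0} : ℝ) * M^2) := by
          apply Real.sqrt_le_sqrt
          have hsum : ∑ i : {i : Fin n // i ≠ 0}, (deriv (u (i:Fin n)) τ)^2
              ≤ ∑ _i : {i : Fin n // i ≠ 0}, M^2 := by
            refine Finset.sum_le_sum fun i _ => ?_
            rw [← sq_abs]
            exact pow_le_pow_left₀ (abs_nonneg _) (hder (i:Fin n)) 2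
          rw [Finset.sum_const, Finset.card_univ, nsmul_eq_mul] at hsum
          exact hsum
      _ = Real.sqrt ((Fintype.card {i : Fin n // i ≠ 0} : ℝ)) * M := by
          rw [Real.sqrt_mul (by positivity), Real.sqrt_sq hM0]
      _ ≤ (n:ℝ) * M := by
          apply mul_le_mul_of_nonneg_right _ hM0
          calc Real.sqrt ((Fintype.card {i : Fin n // i ≠ 0} : ℝ))
              ≤ Real.sqrt (n:ℝ) := Real.sqrt_le_sqrt hcard
            _ ≤ (n:ℝ) := by
                have hn1 : (1:ℝ) ≤ (n:ℝ) := by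
                  exact_mod_cast Nat.one_le_iff_ne_zero.2 (NeZero.ne n)
                nlinarith [Real.sq_sqrt (by positivity : (0:ℝ) ≤ (n:ℝ)),
                  Real.sqrt_nonneg (n:ℝ), sq_nonneg (Real.sqrt (n:ℝ) - 1)]
      _ = K * B := by rw [hK, hM]; ring
  -- Gronwall
  have hgr := norm_le_gronwallBound_of_norm_deriv_right_le (f := F) (f' := F')
    (δ := ‖F 0‖) (K := K) (ε := 0) (a := 0) (b := d)
    (fun τ _ => ((hFd τ).continuousAt).continuousWithinAt)
    (fun τ _ => (hFd τ).hasDerivWithinAt)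
    le_rfl
    (fun τ _ => by rw [add_zero]; exact hbound τ)
  have hFt := hgr t ht
  rw [sub_zero, gronwallBound_ε0] at hFt
  have hexp : ‖F 0‖ * Real.exp (K * t) ≤ ‖F 0‖ * Real.exp (K * d) := by
    apply mul_le_mul_of_nonneg_left _ (norm_nonneg _)
    exact Real.exp_le_exp.2 (mul_le_mul_of_nonneg_left ht.2 hK0)
  calc |u k t| ≤ ‖F t‖ := hcomp_le t k hk
    _ ≤ ‖F 0‖ * Real.exp (K * t) := hFt
    _ ≤ ‖F 0‖ * Real.exp (K * d) := hexp
    _ = Real.sqrt (∑ i : {i : Fin n // i ≠ 0}, (deriv (fun s => w s (i:Fin n)) 0)^2)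
        * Real.exp (K * d) := by rw [hnormF 0]

end gron

/-- **inequality (A.3).** There is a constant `K₁ > 0`, independent of
`(x,ξ) ∈ D × G` and `t ∈ [0,d₀]`, with `||ξ|_g ż^k(x, ξ/|ξ|_g, t)| ≤ K₁` for
`2 ≤ k ≤ n`, where `d₀` is the diameter of `D` in the metric `g`. -/
theorem stmt_13 (n : ℕ) (hn : 2 ≤ n) [NeZero n]
    (g : (Fin n → ℝ) → Matrix (Fin n) (Fin n) ℝ)
    (hg_smooth : ∀ i j : Fin n, ContDiff ℝ 6 fun x => g x i j)
    (hg_symm : ∀ x, (g x).IsSymm)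
    (hg_pos : ∀ x, (g x).PosDef)
    (hg_eucl : ∃ R : ℝ, ∀ x : Fin n → ℝ, R < eunorm x → g x = 1)
    (hg_semi : ∀ x : Fin n → ℝ, g x 0 0 = 1 ∧ ∀ i : Fin n, i ≠ 0 → g x 0 i = 0)
    (z : (Fin n → ℝ) → (Fin n → ℝ) → ℝ → Fin n → ℝ)
    (hz : IsGeodesicFlow g z)
    (D : Set (Fin n → ℝ))
    (hD_closed : IsClosed D) (hD_bdd : Bornology.IsBounded D)
    (hD_sc : SimplyConnectedSpace D)
    (hD_conv : StronglyConvexIn g D)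
    (G' : Set ({i : Fin n // i ≠ 0} → ℝ))
    (hGp_closed : IsClosed G') (hGp_bdd : Bornology.IsBounded G')
    (hGp_ne : (0 : {i : Fin n // i ≠ 0} → ℝ) ∉ G')
    (G : Set (Fin n → ℝ)) (hG : G = {ξ : Fin n → ℝ | restr ξ ∈ G'})
    (d0 : ℝ)
    (hd0_ub : ∀ x ∈ D, ∀ y ∈ D, ∀ γ T, UnitSpeedGeodesicIn g D x y γ T → T ≤ d0)
    (hd0_lub : ∀ d' : ℝ,
      (∀ x ∈ D, ∀ y ∈ D, ∀ γ T, UnitSpeedGeodesicIn g D x y γ T → T ≤ d') → d0 ≤ d') :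
    ∃ K₁ : ℝ, 0 < K₁ ∧ ∀ x ∈ D, ∀ ξ ∈ G, ∀ t ∈ Set.Icc (0:ℝ) d0, ∀ k : Fin n, k ≠ 0 →
      |normg g x ξ * zdot z x ((normg g x ξ)⁻¹ • ξ) t k| ≤ K₁ := by
  obtain ⟨K, hK0, hKey⟩ := key_bound hg_smooth hg_symm hg_pos hg_eucl hg_semi
  obtain ⟨Cg, hCg⟩ := isBounded_iff_forall_norm_le.1 hGp_bdd
  set Cg' : ℝ := max Cg 0 with hCg'
  have hCg'0 : 0 ≤ Cg' := le_max_right _ _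
  set M : ℝ := (n:ℝ) * Cg' with hM
  have hM0 : 0 ≤ M := by positivity
  refine ⟨M * Real.exp (K * d0) + 1, by positivity, ?_⟩
  intro x hx ξ hξ t ht k hk
  have hd0 : (0:ℝ) ≤ d0 := le_trans ht.1 ht.2
  have hξG' : restr ξ ∈ G' := by rw [hG] at hξ; exact hξ
  have hξ0 : ξ ≠ 0 := by
    intro h
    apply hGp_ne
    have : restr ξ = 0 := by subst h; rfl
    rwa [this] at hξG'
  set Q : ℝ := ∑ i, ∑ j, g x i j * ξ i * ξ j with hQ
  have hQpos : 0 < Q := quad_pos hg_pos x hξ0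
  set m : ℝ := normg g x ξ with hm
  have hmQ : m = Real.sqrt Q := rfl
  have hmpos : 0 < m := by rw [hmQ]; exact Real.sqrt_pos.2 hQpos
  have hm2 : m ^ 2 = Q := by rw [hmQ]; exact Real.sq_sqrt hQpos.le
  set v : Fin n → ℝ := m⁻¹ • ξ with hv
  have hv0 : v ≠ 0 := smul_ne_zero (inv_ne_zero hmpos.ne') hξ0
  obtain ⟨⟨hgeo, hw0, hwderiv⟩, -⟩ := hz x v hv0
  set w : ℝ → Fin n → ℝ := z x v with hwdef
  have hvi : ∀ i, deriv (fun s => w s i) 0 = m⁻¹ * ξ i := by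
    intro i
    rw [hwderiv i]
    rfl
  have hE1 : ∑ i, ∑ j, g (w 0) i j * deriv (fun s => w s i) 0 * deriv (fun s => w s j) 0
      = 1 := by
    rw [hw0]
    rw [Finset.sum_congr rfl fun i _ => Finset.sum_congr rfl fun j _ => by
      rw [hvi i, hvi j]]
    have hfac : ∑ i, ∑ j, g x i j * (m⁻¹ * ξ i) * (m⁻¹ * ξ j) = m⁻¹ * m⁻¹ * Q := by
      rw [hQ, Finset.mul_sum]
      refine Finset.sum_congr rfl fun i _ => ?_
      rw [Finset.mul_sum]
      refine Finset.sum_congr rfl fun j _ => by ring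
    rw [hfac, ← hm2]
    field_simp
  have hb := hKey w hgeo hE1 d0 hd0 t ht k hk
  have hzdot : zdot z x v t k = deriv (fun s => w s k) t := rfl
  have hsqrt_eq : m * Real.sqrt (∑ i : {i : Fin n // i ≠ 0}, (deriv (fun s => w s (i:Fin n)) 0)^2)
      = Real.sqrt (∑ i : {i : Fin n // i ≠ 0}, (ξ (i:Fin n))^2) := by
    rw [Finset.sum_congr rfl fun i _ => by rw [hvi (i:Fin n)]]
    rw [show m * Real.sqrt (∑ i : {i : Fin n // i ≠ 0}, (m⁻¹ * ξ (i:Fin n))^2)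
        = Real.sqrt (m^2 * ∑ i : {i : Fin n // i ≠ 0}, (m⁻¹ * ξ (i:Fin n))^2) from by
      rw [Real.sqrt_mul (sq_nonneg m), Real.sqrt_sq hmpos.le]]
    congr 1
    rw [Finset.mul_sum]
    refine Finset.sum_congr rfl fun i _ => ?_
    field_simp
  have hsub_le : Real.sqrt (∑ i : {i : Fin n // i ≠ 0}, (ξ (i:Fin n))^2) ≤ M := by
    have hcomp : ∀ i : {i : Fin n // i ≠ 0}, (ξ (i:Fin n))^2 ≤ Cg'^2 := by
      intro i
      have h1 : |ξ (i:Fin n)| ≤ Cg' := by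
        have h2 : ‖restr ξ i‖ ≤ ‖restr ξ‖ := norm_le_pi_norm (restr ξ) i
        have h3 : ‖restr ξ‖ ≤ Cg := hCg _ hξG'
        calc |ξ (i:Fin n)| = ‖restr ξ i‖ := rfl
          _ ≤ Cg := le_trans h2 h3
          _ ≤ Cg' := le_max_left _ _
      calc (ξ (i:Fin n))^2 = |ξ (i:Fin n)|^2 := (sq_abs _).symm
        _ ≤ Cg'^2 := by gcongr
    have hsum : ∑ i : {i : Fin n // i ≠ 0}, (ξ (i:Fin n))^2
        ≤ (Fintype.card {i : Fin n // i ≠ 0} : ℝ) * Cg'^2 := by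
      have := Finset.sum_le_sum (fun i (_ : i ∈ Finset.univ) => hcomp i)
      rwa [Finset.sum_const, Finset.card_univ, nsmul_eq_mul] at this
    have hcard : (Fintype.card {i : Fin n // i ≠ 0} : ℝ) ≤ (n:ℝ) := by
      have := Fintype.card_subtype_le (fun i : Fin n => i ≠ 0)
      rw [Fintype.card_fin] at this
      exact_mod_cast this
    calc Real.sqrt (∑ i : {i : Fin n // i ≠ 0}, (ξ (i:Fin n))^2)
        ≤ Real.sqrt ((Fintype.card {i : Fin n // i ≠ 0} : ℝ) * Cg'^2) :=
          Real.sqrt_le_sqrt hsum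
      _ = Real.sqrt ((Fintype.card {i : Fin n // i ≠ 0} : ℝ)) * Cg' := by
          rw [Real.sqrt_mul (by positivity), Real.sqrt_sq hCg'0]
      _ ≤ (n:ℝ) * Cg' := by
          apply mul_le_mul_of_nonneg_right _ hCg'0
          calc Real.sqrt ((Fintype.card {i : Fin n // i ≠ 0} : ℝ))
              ≤ Real.sqrt (n:ℝ) := Real.sqrt_le_sqrt hcard
            _ ≤ (n:ℝ) := by
                have hn1 : (1:ℝ) ≤ (n:ℝ) := by
                  exact_mod_cast Nat.one_le_iff_ne_zero.2 (NeZero.ne n)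
                nlinarith [Real.sq_sqrt (by positivity : (0:ℝ) ≤ (n:ℝ)),
                  Real.sqrt_nonneg (n:ℝ), sq_nonneg (Real.sqrt (n:ℝ) - 1)]
      _ = M := rfl
  calc |m * zdot z x v t k| = m * |deriv (fun s => w s k) t| := by
        rw [hzdot, abs_mul, abs_of_pos hmpos]
    _ ≤ m * (Real.sqrt (∑ i : {i : Fin n // i ≠ 0}, (deriv (fun s => w s (i:Fin n)) 0)^2)
          * Real.exp (K * d0)) := by
        apply mul_le_mul_of_nonneg_left hb hmpos.le
    _ = (m * Real.sqrt (∑ i : {i : Fin n // i ≠ 0}, (deriv (fun s => w s (i:Fin n)) 0)^2))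
          * Real.exp (K * d0) := by ring
    _ = Real.sqrt (∑ i : {i : Fin n // i ≠ 0}, (ξ (i:Fin n))^2) * Real.exp (K * d0) := by
        rw [hsqrt_eq]
    _ ≤ M * Real.exp (K * d0) := by
        apply mul_le_mul_of_nonneg_right hsub_le (Real.exp_pos _).le
    _ ≤ M * Real.exp (K * d0) + 1 := by linarith
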